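/- arXiv:1607.06983 — 9 statements merged into one kernel-verified Lean document; each statement's English description precedes it below -/
import Mathlib

section
/- The quadratic function f(x) = xᵀAx − 2bᵀx + c (A symmetric) is non-negative on R^M if and only if A is positive semidefinite, b lies in the range of A, and c − bᵀA⁺b ≥ 0. -/
open Matrix

private lemma dot_symm {M : ℕ} {A : Matrix (Fin M) (Fin M) ℝ} (h : Aᵀ = A)
    (x y : Fin M → ℝ) : x ⬝ᵥ A *ᵥ y = y ⬝ᵥ A *ᵥ x := by
  rw [Matrix.dotProduct_mulVec, ← Matrix.mulVec_transpose, h, dotProduct_comm]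

private lemma aux_quad (q B c : ℝ) (h : ∀ t : ℝ, 0 ≤ t ^ 2 * q - 2 * (t * B) + c) :
    0 ≤ q := by
  by_contra hq
  push_neg at hq
  have hq' : q ≠ 0 := ne_of_lt hq
  obtain ⟨e, he2, hqe⟩ : ∃ e : ℝ, 0 ≤ e ∧ q * e = -(2 * |B| + |c| + 1) := by
    have hnq : (-q) ≠ 0 := ne_of_gt (by linarith)
    refine ⟨(2 * |B| + |c| + 1) / (-q), div_nonneg (by positivity) (by linarith), ?_⟩
    rw [show q * ((2 * |B| + |c| + 1) / (-q)) =
      -((2 * |B| + |c| + 1) / (-q) * (-q)) by ring, div_mul_cancel₀ _ hnq]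
  have ht := h (e + 1)
  have key : (e + 1) ^ 2 * q - 2 * ((e + 1) * B) + c =
      (q * e) * e + 2 * (q * e) + q - 2 * (e * B) - 2 * B + c := by ring
  rw [key, hqe] at ht
  nlinarith [mul_nonneg he2 (abs_nonneg B), mul_nonneg he2 (abs_nonneg c),
    mul_nonneg he2 (show (0:ℝ) ≤ |B| + B by linarith [neg_abs_le B]),
    le_abs_self c, neg_abs_le B, abs_nonneg B, abs_nonneg c]

private lemma aux_lin (r c : ℝ) (hr0 : 0 ≤ r) (h : ∀ t : ℝ, 0 ≤ -(2 * (t * r)) + c) :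
    r = 0 := by
  by_contra hne
  have hr : 0 < r := lt_of_le_of_ne hr0 (Ne.symm hne)
  have ht := h ((|c| + 1) / (2 * r))
  have he : (|c| + 1) / (2 * r) * r = (|c| + 1) / 2 := by
    field_simp
  rw [he] at ht
  have := le_abs_self c
  linarith

theorem quadratic_nonneg_iff {M : ℕ}
    (A Ap : Matrix (Fin M) (Fin M) ℝ)
    (hsymm : Aᵀ = A)
    (h1 : A * Ap * A = A) (h2 : Ap * A * Ap = Ap)
    (h3 : (A * Ap)ᵀ = A * Ap) (h4 : (Ap * A)ᵀ = Ap * A)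
    (b : Fin M → ℝ) (c : ℝ) :
    (∀ x : Fin M → ℝ, 0 ≤ x ⬝ᵥ A.mulVec x - 2 * (b ⬝ᵥ x) + c) ↔
      A.PosSemidef ∧ (∃ z : Fin M → ℝ, A.mulVec z = b) ∧
        0 ≤ c - b ⬝ᵥ Ap.mulVec b := by
  constructor
  · intro h
    -- Step 1: A is positive semidefinite
    have hpsd : ∀ x : Fin M → ℝ, 0 ≤ x ⬝ᵥ A *ᵥ x := by
      intro x
      refine aux_quad _ (b ⬝ᵥ x) c (fun t => ?_)
      have := h (t • x)
      simp only [Matrix.mulVec_smul, smul_dotProduct, dotProduct_smul,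
        smul_eq_mul] at this
      nlinarith [this]
    -- Step 2: b lies in the range of A
    have e1 : A * Ap = Apᵀ * A := by
      rw [← h3, Matrix.transpose_mul, hsymm]
    have e2 : A * Apᵀ * A = A := by
      calc A * Apᵀ * A = (Aᵀ * Ap * Aᵀ)ᵀ := by
            simp [Matrix.transpose_mul, Matrix.mul_assoc]
        _ = (A * Ap * A)ᵀ := by rw [hsymm]
        _ = A := by rw [h1, hsymm]
    have key : A * (A * Ap) = A := by
      rw [e1, ← Matrix.mul_assoc, e2]
    set w : Fin M → ℝ := b - (A * Ap) *ᵥ b with hwdef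
    have hAw : A *ᵥ w = 0 := by
      rw [hwdef, Matrix.mulVec_sub, Matrix.mulVec_mulVec, key, sub_self]
    have hAAp2 : A * Ap * (A * Ap) = A * Ap := by
      rw [Matrix.mul_assoc, ← Matrix.mul_assoc Ap A Ap, h2]
    have hAApw : (A * Ap) *ᵥ w = 0 := by
      rw [hwdef, Matrix.mulVec_sub, Matrix.mulVec_mulVec, hAAp2, sub_self]
    have hbw : b ⬝ᵥ w = w ⬝ᵥ w := by
      have hb' : b = w + (A * Ap) *ᵥ b := by rw [hwdef]; abel
      have h0 : ((A * Ap) *ᵥ b) ⬝ᵥ w = 0 := by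
        rw [dotProduct_comm, Matrix.dotProduct_mulVec, ← Matrix.mulVec_transpose,
          h3, hAApw, zero_dotProduct]
      conv_lhs => rw [hb']
      rw [add_dotProduct, h0, add_zero]
    have hww : 0 ≤ w ⬝ᵥ w := by simpa using dotProduct_self_star_nonneg w
    have hw0 : w = 0 := by
      rw [← dotProduct_self_eq_zero (v := w)]
      refine aux_lin _ c hww (fun t => ?_)
      have := h (t • w)
      simp only [Matrix.mulVec_smul, hAw, smul_zero, dotProduct_zero,
        smul_dotProduct, dotProduct_smul, smul_eq_mul, hbw] at this
      nlinarith [this]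
    have hw0' : b - (A * Ap) *ᵥ b = 0 := by rw [← hwdef]; exact hw0
    have hb : A *ᵥ (Ap *ᵥ b) = b := by
      rw [Matrix.mulVec_mulVec]
      exact (sub_eq_zero.mp hw0').symm
    refine ⟨PosSemidef.of_dotProduct_mulVec_nonneg (by simpa [Matrix.IsHermitian] using hsymm) (fun x => by simpa using hpsd x),
      ⟨Ap *ᵥ b, hb⟩, ?_⟩
    -- Step 3: plug in x = Ap b
    have hx := h (Ap *ᵥ b)
    have e5 : (Ap *ᵥ b) ⬝ᵥ A *ᵥ (Ap *ᵥ b) = b ⬝ᵥ Ap *ᵥ b := by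
      rw [hb, dotProduct_comm]
    rw [e5] at hx
    linarith
  · rintro ⟨hA, ⟨z, hz⟩, hc⟩
    intro x
    have hAy : A *ᵥ (Ap *ᵥ b) = b := by
      rw [← hz, Matrix.mulVec_mulVec, Matrix.mulVec_mulVec, h1]
    set y : Fin M → ℝ := Ap *ᵥ b with hydef
    have hyAy : y ⬝ᵥ A *ᵥ y = b ⬝ᵥ Ap *ᵥ b := by
      rw [hAy, dotProduct_comm, hydef]
    have hbx : b ⬝ᵥ x = y ⬝ᵥ A *ᵥ x := by
      rw [← hAy, dotProduct_comm, dot_symm hsymm]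
    have hexp : (x - y) ⬝ᵥ A *ᵥ (x - y) =
        x ⬝ᵥ A *ᵥ x - 2 * (y ⬝ᵥ A *ᵥ x) + y ⬝ᵥ A *ᵥ y := by
      rw [Matrix.mulVec_sub, dotProduct_sub, sub_dotProduct,
        sub_dotProduct, dot_symm hsymm x y]
      ring
    have hpos : 0 ≤ (x - y) ⬝ᵥ A *ᵥ (x - y) := by simpa using hA.dotProduct_mulVec_nonneg (x - y)
    rw [hexp] at hpos
    rw [hbx]
    have : y ⬝ᵥ A *ᵥ y = b ⬝ᵥ Ap *ᵥ b := hyAy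
    linarith
end

section
/- The quadratic function f(x) = xᵀAx − 2bᵀx + c (A symmetric) is positive on all of R^M if and only if A is positive semidefinite, b lies in the range of A, and c − bᵀA⁺b > 0. -/
open Matrix

theorem quadratic_pos_iff {M : ℕ}
    (A Ap : Matrix (Fin M) (Fin M) ℝ)
    (hsymm : Aᵀ = A)
    (h1 : A * Ap * A = A) (h2 : Ap * A * Ap = Ap)
    (h3 : (A * Ap)ᵀ = A * Ap) (h4 : (Ap * A)ᵀ = Ap * A)
    (b : Fin M → ℝ) (c : ℝ) :
    (∀ x : Fin M → ℝ, 0 < x ⬝ᵥ A.mulVec x - 2 * (b ⬝ᵥ x) + c) ↔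
      A.PosSemidef ∧ (∃ z : Fin M → ℝ, A.mulVec z = b) ∧
        0 < c - b ⬝ᵥ Ap.mulVec b := by
  have hdm : ∀ (v w : Fin M → ℝ), v ⬝ᵥ A.mulVec w = Aᵀ.mulVec v ⬝ᵥ w := by
    intro v w; rw [Matrix.dotProduct_mulVec, Matrix.mulVec_transpose]
  have h5 : A * Apᵀ * A = A := by
    have := congrArg Matrix.transpose h1
    simpa [Matrix.transpose_mul, hsymm, Matrix.mul_assoc] using this
  have hAAp : A * (A * Ap) = A := by
    calc A * (A * Ap) = A * (A * Ap)ᵀ := by rw [h3]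
    _ = A * (Apᵀ * Aᵀ) := by rw [Matrix.transpose_mul]
    _ = A * Apᵀ * A := by rw [hsymm, Matrix.mul_assoc]
    _ = A := h5
  have hAApT : A * Ap = Apᵀ * A := by
    rw [← h3, Matrix.transpose_mul, hsymm]
  constructor
  · intro h
    have hc0 : 0 < c := by simpa using h 0
    -- positive semidefiniteness
    have hpsd_ineq : ∀ x : Fin M → ℝ, 0 ≤ x ⬝ᵥ A.mulVec x := by
      intro x
      by_contra hq
      push_neg at hq
      set q := x ⬝ᵥ A.mulVec x with hqdef
      have key : ∀ t : ℝ, 0 < t ^ 2 * q + c := by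
        intro t
        have ha := h (t • x)
        have hb' := h (-(t • x))
        have e1 : (t • x) ⬝ᵥ A.mulVec (t • x) = t ^ 2 * q := by
          simp [Matrix.mulVec_smul, smul_dotProduct, dotProduct_smul, hqdef]
          ring
        have e2 : (-(t • x)) ⬝ᵥ A.mulVec (-(t • x)) = t ^ 2 * q := by
          simp [Matrix.mulVec_neg, Matrix.mulVec_smul, smul_dotProduct,
            dotProduct_smul, dotProduct_neg, neg_dotProduct, hqdef]
          ring
        have e3 : b ⬝ᵥ (-(t • x)) = -(b ⬝ᵥ (t • x)) := by simp
        rw [e1] at ha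
        rw [e2, e3] at hb'
        nlinarith [ha, hb']
      have ht := key (Real.sqrt ((c + 1) / (-q)))
      have hqn : (0:ℝ) < -q := by linarith
      rw [Real.sq_sqrt (le_of_lt (div_pos (by linarith) hqn))] at ht
      have he : (c + 1) / (-q) * q = -(c + 1) := by
        field_simp
        rw [div_self hq.ne]
      rw [he] at ht
      linarith
    have hpsd : A.PosSemidef := by
      refine .of_dotProduct_mulVec_nonneg ?_ ?_
      · exact (Matrix.conjTranspose_eq_transpose_of_trivial A).trans hsymm
      · intro x; simpa using hpsd_ineq x
    -- b in range of A
    set r := b - (A * Ap).mulVec b with hrdef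
    have hdm' : ∀ (N : Matrix (Fin M) (Fin M) ℝ) (v w : Fin M → ℝ),
        v ⬝ᵥ N.mulVec w = Nᵀ.mulVec v ⬝ᵥ w := by
      intro N v w; rw [Matrix.dotProduct_mulVec, Matrix.mulVec_transpose]
    have hAr : A.mulVec r = 0 := by
      have : A.mulVec ((A * Ap).mulVec b) = A.mulVec b := by
        rw [Matrix.mulVec_mulVec, hAAp]
      rw [hrdef, Matrix.mulVec_sub, this, sub_self]
    have h6 : r ⬝ᵥ (A * Ap).mulVec b = 0 := by
      rw [hdm' (A * Ap), h3, hAApT, ← Matrix.mulVec_mulVec, hAr,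
        Matrix.mulVec_zero, zero_dotProduct]
    have hrb : r ⬝ᵥ b = r ⬝ᵥ r := by
      have : r ⬝ᵥ b = r ⬝ᵥ r + r ⬝ᵥ (A * Ap).mulVec b := by
        rw [← dotProduct_add, hrdef]
        congr 1
        abel
      rw [this, h6, add_zero]
    have hrr : r ⬝ᵥ r = 0 := by
      by_contra hne
      have hpos : 0 < r ⬝ᵥ r :=
        lt_of_le_of_ne (Finset.sum_nonneg fun i _ => mul_self_nonneg _) (Ne.symm hne)
      set t := (c + 1) / (2 * (r ⬝ᵥ r)) with htdef
      have ha := h (t • r)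
      have e1 : (t • r) ⬝ᵥ A.mulVec (t • r) = 0 := by
        rw [Matrix.mulVec_smul, hAr]
        simp
      have e2 : b ⬝ᵥ (t • r) = t * (r ⬝ᵥ r) := by
        rw [dotProduct_smul, dotProduct_comm, hrb]
        simp [mul_comm]
      rw [e1, e2] at ha
      have : t * (r ⬝ᵥ r) = (c + 1) / 2 := by
        rw [htdef]
        field_simp
      rw [this] at ha
      linarith
    have hr0 : r = 0 := by
      have := (dotProduct_self_eq_zero (v := r)).mp hrr
      exact this
    have hb : A.mulVec (Ap.mulVec b) = b := by
      rw [Matrix.mulVec_mulVec]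
      have h0 : b - (A * Ap).mulVec b = 0 := by rw [← hrdef]; exact hr0
      exact (sub_eq_zero.mp h0).symm
    refine ⟨hpsd, ⟨Ap.mulVec b, hb⟩, ?_⟩
    have ha := h (Ap.mulVec b)
    have e1 : (Ap.mulVec b) ⬝ᵥ A.mulVec (Ap.mulVec b) = b ⬝ᵥ Ap.mulVec b := by
      rw [hb, dotProduct_comm]
    rw [e1] at ha
    linarith
  · rintro ⟨hpsd, ⟨z, hz⟩, hc⟩ x
    have hzb : b ⬝ᵥ Ap.mulVec b = z ⬝ᵥ A.mulVec z := by
      rw [← hz, dotProduct_comm, hdm, hsymm, Matrix.mulVec_mulVec,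
        Matrix.mulVec_mulVec, h1, dotProduct_comm]
    have hbx : b ⬝ᵥ x = z ⬝ᵥ A.mulVec x := by
      rw [← hz, dotProduct_comm, hdm, hsymm, dotProduct_comm]
    have hxz : x ⬝ᵥ A.mulVec z = z ⬝ᵥ A.mulVec x := by
      rw [hdm, hsymm, dotProduct_comm]
    have hexp : (x - z) ⬝ᵥ A.mulVec (x - z) =
        x ⬝ᵥ A.mulVec x - 2 * (z ⬝ᵥ A.mulVec x) + z ⬝ᵥ A.mulVec z := by
      rw [Matrix.mulVec_sub, sub_dotProduct, dotProduct_sub, dotProduct_sub, hxz]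
      ring
    have hnn : 0 ≤ (x - z) ⬝ᵥ A.mulVec (x - z) := by
      have := hpsd.dotProduct_mulVec_nonneg (x - z)
      simpa using this
    rw [hzb] at hc
    rw [hbx]
    nlinarith [hnn, hexp, hc]
end

section
/- If a quadratic function f(x) = xᵀAx − 2bᵀx + c (A symmetric) attains a minimum on R^M, then its minimum value equals c − bᵀA⁺b, and the minimum is attained at every solution α of Aα = b. -/
open Matrix

theorem quadratic_minimum_value {M : ℕ}
    (A Ap : Matrix (Fin M) (Fin M) ℝ)
    (hsymm : Aᵀ = A)
    (h1 : A * Ap * A = A) (h2 : Ap * A * Ap = Ap)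
    (h3 : (A * Ap)ᵀ = A * Ap) (h4 : (Ap * A)ᵀ = Ap * A)
    (b : Fin M → ℝ) (c : ℝ)
    (f : (Fin M → ℝ) → ℝ)
    (hf : ∀ x, f x = x ⬝ᵥ A.mulVec x - 2 * (b ⬝ᵥ x) + c)
    (hmin : ∃ x₀ : Fin M → ℝ, ∀ x, f x₀ ≤ f x) :
    (∀ x₀ : Fin M → ℝ, (∀ x, f x₀ ≤ f x) → f x₀ = c - b ⬝ᵥ Ap.mulVec b) ∧
      (∀ α : Fin M → ℝ, A.mulVec α = b → ∀ x, f α ≤ f x) := by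
  have hswap : ∀ x y : Fin M → ℝ, x ⬝ᵥ A.mulVec y = y ⬝ᵥ A.mulVec x := by
    intro x y
    rw [dotProduct_mulVec, ← mulVec_transpose, hsymm, dotProduct_comm]
  have hexp : ∀ (z v : Fin M → ℝ) (t : ℝ),
      f (z + t • v) = f z + 2*t*((A.mulVec z - b) ⬝ᵥ v) + t^2 * (v ⬝ᵥ A.mulVec v) := by
    intro z v t
    simp only [hf, mulVec_add, mulVec_smul, dotProduct_add, add_dotProduct,
      dotProduct_smul, smul_dotProduct, sub_dotProduct, smul_eq_mul]
    rw [dotProduct_comm (A.mulVec z) v, hswap v z]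
    ring
  obtain ⟨x₀, hx₀⟩ := hmin
  have hpsd : ∀ v, 0 ≤ v ⬝ᵥ A.mulVec v := by
    intro v
    have ha := hx₀ (x₀ + (1:ℝ) • v)
    have hb := hx₀ (x₀ + (-1:ℝ) • v)
    rw [hexp] at ha hb
    nlinarith
  have hcrit : ∀ y : Fin M → ℝ, (∀ x, f y ≤ f x) → A.mulVec y = b := by
    intro y hy
    set d := A.mulVec y - b with hd
    have hD : (0:ℝ) ≤ d ⬝ᵥ d := by
      simp only [dotProduct]
      exact Finset.sum_nonneg fun i _ => mul_self_nonneg _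
    have hq : (0:ℝ) ≤ d ⬝ᵥ A.mulVec d := hpsd d
    have hs : (0:ℝ) < d ⬝ᵥ A.mulVec d + 1 := by linarith
    have ht := hy (y + (-(d ⬝ᵥ d)/(d ⬝ᵥ A.mulVec d + 1)) • d)
    rw [hexp] at ht
    have hd0 : d ⬝ᵥ d = 0 := by
      set D := d ⬝ᵥ d
      set q := d ⬝ᵥ A.mulVec d
      have key : 0 ≤ 2*(-D/(q+1))*D + (-D/(q+1))^2 * q := by linarith
      have h2' : 0 ≤ (2*(-D/(q+1))*D + (-D/(q+1))^2 * q) * (q+1)^2 :=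
        mul_nonneg key (by positivity)
      have heq : (2*(-D/(q+1))*D + (-D/(q+1))^2 * q) * (q+1)^2
          = -D^2 * (q + 2) * (q+1) / (q+1) := by
        field_simp
        ring
      rw [heq] at h2'
      rw [mul_div_assoc, div_self (ne_of_gt hs)] at h2'
      nlinarith
    have : d = 0 := by
      ext i
      have : ∀ j, d j * d j = 0 := by
        intro j
        have hsum : ∑ k, d k * d k = 0 := hd0
        by_contra hne
        have : 0 < d j * d j := lt_of_le_of_ne (mul_self_nonneg _) (Ne.symm hne)
        have := Finset.sum_pos' (fun k _ => mul_self_nonneg (d k))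
          ⟨j, Finset.mem_univ j, this⟩
        linarith
      have := this i
      simpa [mul_self_eq_zero] using this
    have := sub_eq_zero.mp (hd ▸ this)
    exact this
  constructor
  · intro y hy
    have hAy := hcrit y hy
    have hb1 : b ⬝ᵥ y = y ⬝ᵥ A.mulVec y := by rw [← hAy, dotProduct_comm]
    have hb2 : b ⬝ᵥ Ap.mulVec b = y ⬝ᵥ A.mulVec y := by
      rw [← hAy, dotProduct_comm, hswap (Ap.mulVec (A.mulVec y)) y,
        mulVec_mulVec, mulVec_mulVec, h1]
    rw [hf, hb1, hb2]; ring
  · intro α hα x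
    have := hexp α (x - α) 1
    simp only [one_smul, add_sub_cancel, hα, sub_self, zero_dotProduct, one_pow] at this
    rw [this]
    have := hpsd (x - α)
    linarith
end

section
/- Every non-negative quadratic function on R^M can be written as a sum of squares of (affine) linear functions, i.e., if f(x) = xᵀAx − 2bᵀx + c (A symmetric) satisfies f(x) ≥ 0 for all x, then there exist N, vectors b⁽ʲ⁾ ∈ R^M and constants cⱼ such that f(x) = Σⱼ₌₁^N (b⁽ʲ⁾ᵀx + cⱼ)². -/
open Matrix

private lemma quad_coeff_nonneg (q r c : ℝ) (h : ∀ s : ℝ, 0 ≤ q * s ^ 2 + r * s + c) :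
    0 ≤ q := by
  by_contra hq
  push_neg at hq
  set s : ℝ := max 1 ((|r| + |c| + 1) / (-q)) with hs
  have h1 : (1:ℝ) ≤ s := le_max_left _ _
  have h2 : (|r| + |c| + 1) / (-q) ≤ s := le_max_right _ _
  have hq' : (0:ℝ) < -q := by linarith
  have h3 : |r| + |c| + 1 ≤ (-q) * s := by
    rw [div_le_iff₀ hq'] at h2; linarith
  have h4 : q * s + r ≤ -|c| - 1 := by
    have := le_abs_self r; linarith
  have h5 : s * (q * s + r) ≤ 1 * (-|c| - 1) := by
    calc s * (q * s + r) ≤ s * (-|c| - 1) :=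
          mul_le_mul_of_nonneg_left h4 (by linarith)
      _ ≤ 1 * (-|c| - 1) := by
          have hc : -|c| - 1 ≤ 0 := by have := abs_nonneg c; linarith
          exact mul_le_mul_of_nonpos_right h1 hc
  have h6 := h s
  have := le_abs_self c
  have := neg_abs_le c
  nlinarith [h5, h6]

private lemma key_block_identity {M : ℕ} (A : Matrix (Fin M) (Fin M) ℝ) (b : Fin M → ℝ) (c : ℝ)
    (x : Fin M → ℝ) (t : ℝ) :
      (Sum.elim x (fun _ => t)) ⬝ᵥ
        ((Matrix.fromBlocks A (Matrix.of fun i _ => -b i) (Matrix.of fun _ j => -b j)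
          (Matrix.of fun _ _ => c)) : Matrix (Fin M ⊕ Fin 1) (Fin M ⊕ Fin 1) ℝ) *ᵥ
          (Sum.elim x (fun _ => t))
        = x ⬝ᵥ A.mulVec x - 2 * t * (b ⬝ᵥ x) + c * t ^ 2 := by
  simp only [mulVec, dotProduct, Fintype.sum_sum_type, Sum.elim_inl, Sum.elim_inr,
    fromBlocks_apply₁₁, fromBlocks_apply₁₂, fromBlocks_apply₂₁, fromBlocks_apply₂₂,
    Matrix.of_apply, Finset.univ_unique, Finset.sum_singleton, Finset.mul_sum,
    Finset.sum_add_distrib, mul_sub, Finset.sum_sub_distrib]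
  ring_nf
  rw [Finset.sum_sub_distrib]
  have h2 : ∑ i : Fin M, x i * ∑ j : Fin M, A i j * x j
      = ∑ x_1 : Fin M, ∑ x_2 : Fin M, x x_2 * A x_2 x_1 * x x_1 := by
    simp_rw [Finset.mul_sum]
    rw [Finset.sum_comm]
    exact Finset.sum_congr rfl fun j _ => Finset.sum_congr rfl fun i _ => by ring
  have h4 : ∑ i : Fin M, -b i * x i = -∑ i : Fin M, b i * x i := by
    simp [neg_mul]
  have h3 : ∑ i : Fin M, x i * b i * t = t * ∑ i : Fin M, b i * x i := by
    rw [Finset.mul_sum]; exact Finset.sum_congr rfl fun i _ => by ring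
  have h5 : ∑ i : Fin M, t * 2 * b i * x i = 2 * t * ∑ i : Fin M, b i * x i := by
    rw [Finset.mul_sum]; exact Finset.sum_congr rfl fun i _ => by ring
  have k1 : ∑ x_1 : Fin M, -(b x_1 * x x_1) = -∑ i : Fin M, b i * x i := by simp
  have k2 : ∑ x_1 : Fin M, t * b x_1 * x x_1 * 2 = 2 * t * ∑ i : Fin M, b i * x i := by
    rw [Finset.mul_sum]; exact Finset.sum_congr rfl fun i _ => by ring
  rw [h2, k1, h3, k2]
  rw [Finset.sum_comm (f := fun x_1 x_2 => x x_2 * A x_2 x_1 * x x_1)]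
  ring

theorem nonneg_quadratic_is_sum_of_squares {M : ℕ}
    (A : Matrix (Fin M) (Fin M) ℝ) (hsymm : Aᵀ = A)
    (b : Fin M → ℝ) (c : ℝ)
    (hnonneg : ∀ x : Fin M → ℝ, 0 ≤ x ⬝ᵥ A.mulVec x - 2 * (b ⬝ᵥ x) + c) :
    ∃ (N : ℕ) (bv : Fin N → (Fin M → ℝ)) (cv : Fin N → ℝ),
      ∀ x : Fin M → ℝ,
        x ⬝ᵥ A.mulVec x - 2 * (b ⬝ᵥ x) + c
          = ∑ j : Fin N, (bv j ⬝ᵥ x + cv j) ^ 2 := by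
  classical
  set Q : Matrix (Fin M ⊕ Fin 1) (Fin M ⊕ Fin 1) ℝ :=
    Matrix.fromBlocks A (Matrix.of fun i _ => -b i) (Matrix.of fun _ j => -b j)
      (Matrix.of fun _ _ => c) with hQ
  have key : ∀ (x : Fin M → ℝ) (t : ℝ),
      (Sum.elim x (fun _ => t)) ⬝ᵥ Q *ᵥ (Sum.elim x (fun _ => t))
        = x ⬝ᵥ A.mulVec x - 2 * t * (b ⬝ᵥ x) + c * t ^ 2 := by
    intro x t
    exact key_block_identity A b c x t
  -- nonnegativity of the augmented form
  have hform : ∀ (x : Fin M → ℝ) (t : ℝ),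
      0 ≤ x ⬝ᵥ A.mulVec x - 2 * t * (b ⬝ᵥ x) + c * t ^ 2 := by
    intro x t
    rcases eq_or_ne t 0 with rfl | ht
    · have hA : 0 ≤ x ⬝ᵥ A.mulVec x := by
        apply quad_coeff_nonneg (x ⬝ᵥ A.mulVec x) (-(2 * (b ⬝ᵥ x))) c
        intro s
        have h := hnonneg (s • x)
        have e1 : (s • x) ⬝ᵥ A.mulVec (s • x) = (x ⬝ᵥ A.mulVec x) * s ^ 2 := by
          rw [Matrix.mulVec_smul, smul_dotProduct, dotProduct_smul]
          simp only [smul_eq_mul]; ring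
        have e2 : b ⬝ᵥ (s • x) = s * (b ⬝ᵥ x) := by
          rw [dotProduct_smul]; simp only [smul_eq_mul]
        rw [e1, e2] at h
        linarith
      simpa using hA
    · have h := hnonneg (t⁻¹ • x)
      have e1 : (t⁻¹ • x) ⬝ᵥ A.mulVec (t⁻¹ • x) = t⁻¹ ^ 2 * (x ⬝ᵥ A.mulVec x) := by
        rw [Matrix.mulVec_smul, smul_dotProduct, dotProduct_smul]
        simp only [smul_eq_mul]; ring
      have e2 : b ⬝ᵥ (t⁻¹ • x) = t⁻¹ * (b ⬝ᵥ x) := by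
        rw [dotProduct_smul]; simp only [smul_eq_mul]
      rw [e1, e2] at h
      have ht2 : 0 < t ^ 2 := by positivity
      have h' := mul_nonneg (le_of_lt ht2) h
      have hexp : t ^ 2 * (t⁻¹ ^ 2 * (x ⬝ᵥ A.mulVec x) - 2 * (t⁻¹ * (b ⬝ᵥ x)) + c)
          = x ⬝ᵥ A.mulVec x - 2 * t * (b ⬝ᵥ x) + c * t ^ 2 := by
        field_simp
      linarith [hexp ▸ h']
  have hsymm' : ∀ i j, A j i = A i j := by
    intro i j
    exact congrFun (congrFun hsymm i) j
  have hQpsd : Q.PosSemidef := by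
    refine Matrix.PosSemidef.of_dotProduct_mulVec_nonneg ?_ ?_
    · show Qᴴ = Q
      ext i j
      rcases i with i | i <;> rcases j with j | j <;>
        simp [hQ, Matrix.conjTranspose_apply]
      exact hsymm' i j
    · intro y
      have hy : (Sum.elim (y ∘ Sum.inl) (fun _ => y (Sum.inr 0)) : Fin M ⊕ Fin 1 → ℝ) = y := by
        ext (i | i)
        · rfl
        · have : i = 0 := Subsingleton.elim _ _
          rw [this]; rfl
      have h := hform (y ∘ Sum.inl) (y (Sum.inr 0))
      rw [← key] at h
      rw [hy] at h
      simpa using h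
  open scoped MatrixOrder Matrix.Norms.L2Operator in obtain ⟨B, hB⟩ := CStarAlgebra.nonneg_iff_eq_star_mul_self.mp hQpsd.nonneg
  rw [Matrix.star_eq_conjTranspose] at hB
  refine ⟨M + 1, fun j i => B (finSumFinEquiv.symm j) (Sum.inl i),
    fun j => B (finSumFinEquiv.symm j) (Sum.inr 0), fun x => ?_⟩
  have h1 : x ⬝ᵥ A.mulVec x - 2 * (b ⬝ᵥ x) + c
      = (Sum.elim x (fun _ => (1:ℝ))) ⬝ᵥ Q *ᵥ (Sum.elim x (fun _ => (1:ℝ))) := by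
    rw [key]; ring
  rw [h1, hB]
  have hBH : Bᴴ = Bᵀ := by ext i j; simp
  rw [hBH]
  set y : Fin M ⊕ Fin 1 → ℝ := Sum.elim x (fun _ => (1:ℝ)) with hy
  rw [← Matrix.mulVec_mulVec, Matrix.dotProduct_mulVec, Matrix.vecMul_transpose]
  have hsq : (B *ᵥ y) ⬝ᵥ (B *ᵥ y) = ∑ k : Fin M ⊕ Fin 1, ((B *ᵥ y) k) ^ 2 := by
    simp [dotProduct, sq]
  rw [hsq]
  rw [← Equiv.sum_comp finSumFinEquiv.symm fun k => ((B *ᵥ y) k) ^ 2]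
  apply Finset.sum_congr rfl
  intro j _
  congr 1
  simp only [mulVec, dotProduct, Fintype.sum_sum_type, hy, Sum.elim_inl, Sum.elim_inr,
    Finset.univ_unique, Finset.sum_singleton, mul_one]
  congr 1
end

section
/- For any vectors b⁽¹⁾, …, b⁽ᴺ⁾ ∈ R^M and scalars c₁, …, c_N, one has (Σⱼ cⱼ b⁽ʲ⁾)ᵀ A⁺ (Σⱼ cⱼ b⁽ʲ⁾) ≤ Σⱼ cⱼ², where A⁺ is the Moore-Penrose pseudoinverse of A = Σⱼ b⁽ʲ⁾b⁽ʲ⁾ᵀ. -/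
open Matrix

private lemma dot_sum_left {ι m : Type*} [Fintype m] (s : Finset ι)
    (f : ι → m → ℝ) (w : m → ℝ) :
    (∑ j ∈ s, f j) ⬝ᵥ w = ∑ j ∈ s, f j ⬝ᵥ w := by
  simp only [dotProduct, Finset.sum_apply, Finset.sum_mul]
  exact Finset.sum_comm

private lemma dot_sum_right {ι m : Type*} [Fintype m] (s : Finset ι)
    (w : m → ℝ) (f : ι → m → ℝ) :
    w ⬝ᵥ (∑ j ∈ s, f j) = ∑ j ∈ s, w ⬝ᵥ f j := by
  simp only [dotProduct, Finset.sum_apply, Finset.mul_sum]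
  exact Finset.sum_comm

private lemma mulVec_sum' {ι m n : Type*} [Fintype m] [Fintype n] (s : Finset ι)
    (P : Matrix m n ℝ) (f : ι → n → ℝ) :
    P.mulVec (∑ j ∈ s, f j) = ∑ j ∈ s, P.mulVec (f j) := by
  funext i
  simpa [Matrix.mulVec, Finset.sum_apply] using dot_sum_right s (fun k => P i k) f

private lemma dot_self_zero {m : Type*} [Fintype m] (x : m → ℝ) (hx : x ⬝ᵥ x = 0) :
    x = 0 := by
  funext i
  have := (Finset.sum_eq_zero_iff_of_nonneg
    (fun i (_ : i ∈ Finset.univ) => mul_self_nonneg (x i))).mp hx i (Finset.mem_univ i)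
  simpa [mul_self_eq_zero] using this

theorem pseudoinverse_inequality {M N : ℕ}
    (b : Fin N → (Fin M → ℝ)) (c : Fin N → ℝ)
    (A Ap : Matrix (Fin M) (Fin M) ℝ)
    (hA : A = ∑ j : Fin N, Matrix.vecMulVec (b j) (b j))
    (h1 : A * Ap * A = A) (h2 : Ap * A * Ap = Ap)
    (h3 : (A * Ap)ᵀ = A * Ap) (h4 : (Ap * A)ᵀ = Ap * A) :
    (∑ j : Fin N, c j • b j) ⬝ᵥ Ap.mulVec (∑ j : Fin N, c j • b j)
      ≤ ∑ j : Fin N, (c j) ^ 2 := by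
  set v : Fin M → ℝ := ∑ j : Fin N, c j • b j with hv
  -- A is symmetric
  have hAsymm : Aᵀ = A := by
    ext i k
    simp [hA, Matrix.sum_apply, vecMulVec_apply, mul_comm]
  -- mulVec of A
  have hmulA : ∀ z : Fin M → ℝ, A.mulVec z = ∑ j : Fin N, (b j ⬝ᵥ z) • b j := by
    intro z
    funext i
    simp only [hA, Matrix.mulVec, dotProduct, Matrix.sum_apply, vecMulVec_apply,
      Finset.sum_apply, Pi.smul_apply, smul_eq_mul, Finset.sum_mul]
    rw [Finset.sum_comm]
    refine Finset.sum_congr rfl fun j _ => ?_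
    exact Finset.sum_congr rfl fun k _ => by ring
  -- quadratic form of A is a sum of squares
  have hquad : ∀ z : Fin M → ℝ, z ⬝ᵥ A.mulVec z = ∑ j : Fin N, (b j ⬝ᵥ z) ^ 2 := by
    intro z
    rw [hmulA, dot_sum_right]
    refine Finset.sum_congr rfl fun j _ => ?_
    rw [dotProduct_smul, dotProduct_comm, smul_eq_mul, sq]
  set P : Matrix (Fin M) (Fin M) ℝ := A * Ap with hP
  have hPA : P * A = A := h1
  -- (P - 1) * A = 0
  have hQA : (P - 1) * A = 0 := by
    rw [Matrix.sub_mul, hPA, Matrix.one_mul, sub_self]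
  -- A * (P - 1)ᵀ = 0
  have hAQ : A * (P - 1)ᵀ = 0 := by
    have := congrArg Matrix.transpose hQA
    rwa [Matrix.transpose_mul, hAsymm, Matrix.transpose_zero] at this
  -- each b j is fixed by P
  have hfix : ∀ j : Fin N, P.mulVec (b j) = b j := by
    intro j
    have key : ∀ w : Fin M → ℝ, ∀ k : Fin N, b k ⬝ᵥ ((P - 1)ᵀ.mulVec w) = 0 := by
      intro w k
      set z := (P - 1)ᵀ.mulVec w with hz
      have hAz : A.mulVec z = 0 := by
        rw [hz, Matrix.mulVec_mulVec, hAQ, Matrix.zero_mulVec]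
      have hsum : (0:ℝ) = ∑ j : Fin N, (b j ⬝ᵥ z) ^ 2 := by
        rw [← hquad, hAz, dotProduct_zero]
      have := (Finset.sum_eq_zero_iff_of_nonneg (fun i _ => sq_nonneg (b i ⬝ᵥ z))).mp
        hsum.symm k (Finset.mem_univ k)
      exact pow_eq_zero_iff (two_ne_zero) |>.mp this
    have key2 : ∀ w : Fin M → ℝ, ((P - 1).mulVec (b j)) ⬝ᵥ w = 0 := by
      intro w
      have h := key w j
      rw [Matrix.mulVec_transpose] at h
      rw [dotProduct_comm, Matrix.dotProduct_mulVec, ← dotProduct_comm (b j)]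
      exact h
    have hzero : (P - 1).mulVec (b j) = 0 :=
      dot_self_zero _ (key2 ((P - 1).mulVec (b j)))
    have := congrArg (· + b j) hzero
    simpa [Matrix.sub_mulVec, Matrix.one_mulVec, sub_add_cancel] using this
  -- P fixes v
  have hPv : P.mulVec v = v := by
    rw [hv, mulVec_sum']
    refine Finset.sum_congr rfl fun j _ => ?_
    rw [Matrix.mulVec_smul, hfix]
  set y : Fin M → ℝ := Ap.mulVec v with hy
  have hAy : A.mulVec y = v := by
    rw [hy, Matrix.mulVec_mulVec]
    exact hPv
  set t : ℝ := v ⬝ᵥ y with ht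
  have hts : t = ∑ j : Fin N, (b j ⬝ᵥ y) ^ 2 := by
    rw [← hquad y, hAy, ht, dotProduct_comm]
  have htc : t = ∑ j : Fin N, c j * (b j ⬝ᵥ y) := by
    rw [ht, hv, dot_sum_left]
    refine Finset.sum_congr rfl fun j _ => ?_
    rw [smul_dotProduct]
    rfl
  have hCS : t ^ 2 ≤ (∑ j : Fin N, (c j) ^ 2) * t := by
    calc t ^ 2 = (∑ j : Fin N, c j * (b j ⬝ᵥ y)) ^ 2 := by rw [htc]
    _ ≤ (∑ j : Fin N, (c j) ^ 2) * ∑ j : Fin N, (b j ⬝ᵥ y) ^ 2 :=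
        Finset.sum_mul_sq_le_sq_mul_sq _ _ _
    _ = (∑ j : Fin N, (c j) ^ 2) * t := by rw [← hts]
  have htnn : 0 ≤ t := by
    rw [hts]
    exact Finset.sum_nonneg fun i _ => sq_nonneg _
  have hSnn : 0 ≤ ∑ j : Fin N, (c j) ^ 2 :=
    Finset.sum_nonneg fun i _ => sq_nonneg _
  show t ≤ ∑ j : Fin N, (c j) ^ 2
  nlinarith [hCS, htnn, hSnn]
end

section
/- If there exists α ∈ R^M with b⁽ʲ⁾ᵀα = −cⱼ for all 1 ≤ j ≤ N, then (Σⱼ cⱼ b⁽ʲ⁾)ᵀ A⁺ (Σⱼ cⱼ b⁽ʲ⁾) = Σⱼ cⱼ², where A = Σⱼ b⁽ʲ⁾b⁽ʲ⁾ᵀ. -/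
open Matrix

theorem pseudoinverse_equality_case {M N : ℕ}
    (b : Fin N → (Fin M → ℝ)) (c : Fin N → ℝ)
    (A Ap : Matrix (Fin M) (Fin M) ℝ)
    (hA : A = ∑ j : Fin N, Matrix.vecMulVec (b j) (b j))
    (h1 : A * Ap * A = A) (h2 : Ap * A * Ap = Ap)
    (h3 : (A * Ap)ᵀ = A * Ap) (h4 : (Ap * A)ᵀ = Ap * A)
    (α : Fin M → ℝ) (hα : ∀ j : Fin N, b j ⬝ᵥ α = -c j) :
    (∑ j : Fin N, c j • b j) ⬝ᵥ Ap.mulVec (∑ j : Fin N, c j • b j)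
      = ∑ j : Fin N, (c j) ^ 2 := by
  set v : Fin M → ℝ := ∑ j : Fin N, c j • b j with hv
  have hAsym : Aᵀ = A := by
    rw [hA, transpose_sum]
    apply Finset.sum_congr rfl
    intro j _
    ext i k
    simp [vecMulVec_apply, mul_comm]
  have hbα : ∀ j k, ∑ x, b j k * b j x * α x = b j k * (-c j) := by
    intro j k
    have hj := hα j
    simp only [dotProduct] at hj
    calc ∑ x, b j k * b j x * α x = b j k * ∑ x, b j x * α x := by
          rw [Finset.mul_sum]; exact Finset.sum_congr rfl fun x _ => by ring
      _ = b j k * (-c j) := by rw [hj]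
  have hAα : A *ᵥ α = -v := by
    funext i
    simp only [hA, hv, mulVec, dotProduct, Matrix.sum_apply, Finset.sum_apply, vecMulVec_apply,
      Pi.neg_apply, Pi.smul_apply, smul_eq_mul, Finset.sum_mul]
    rw [Finset.sum_comm]
    have : ∀ j : Fin N, j ∈ Finset.univ →
        (∑ x, b j i * b j x * α x) = -(c j * b j i) := by
      intro j _
      rw [hbα j i]; ring
    rw [Finset.sum_congr rfl this]
    simp
  have hmove : ∀ (x y : Fin M → ℝ), (A *ᵥ x) ⬝ᵥ y = x ⬝ᵥ (A *ᵥ y) := by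
    intro x y
    rw [dotProduct_comm, dotProduct_mulVec, ← mulVec_transpose, hAsym, dotProduct_comm]
  have h1' : v = A *ᵥ (-α) := by rw [mulVec_neg, hAα, neg_neg]
  have key : v ⬝ᵥ Ap *ᵥ v = -(α ⬝ᵥ v) := by
    calc v ⬝ᵥ Ap *ᵥ v = (A *ᵥ (-α)) ⬝ᵥ Ap *ᵥ v := by rw [← h1']
      _ = (-α) ⬝ᵥ (A *ᵥ (Ap *ᵥ v)) := hmove _ _
      _ = (-α) ⬝ᵥ ((A * Ap) *ᵥ v) := by rw [mulVec_mulVec]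
      _ = (-α) ⬝ᵥ ((A * Ap) *ᵥ (A *ᵥ (-α))) := by rw [← h1']
      _ = (-α) ⬝ᵥ ((A * Ap * A) *ᵥ (-α)) := by rw [mulVec_mulVec]
      _ = (-α) ⬝ᵥ (A *ᵥ (-α)) := by rw [h1]
      _ = (-α) ⬝ᵥ v := by rw [← h1']
      _ = -(α ⬝ᵥ v) := by rw [neg_dotProduct]
  rw [key, hv]
  simp only [dotProduct, Finset.sum_apply, Pi.smul_apply, smul_eq_mul, Finset.mul_sum]
  rw [Finset.sum_comm]
  have : ∀ j : Fin N, j ∈ Finset.univ →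
      (∑ x, α x * (c j * b j x)) = -(c j ^ 2) := by
    intro j _
    have hj := hα j
    simp only [dotProduct] at hj
    calc ∑ x, α x * (c j * b j x) = c j * ∑ x, b j x * α x := by
          rw [Finset.mul_sum]; exact Finset.sum_congr rfl fun x _ => by ring
      _ = -(c j ^ 2) := by rw [hj]; ring
  rw [Finset.sum_congr rfl this]
  simp
end

section
/- Suppose f(x) = Σⱼ₌₁^N (b⁽ʲ⁾ᵀx + cⱼ)² + h and also f(x) = Σⱼ₌₁^s (b̂⁽ʲ⁾ᵀx + ĉⱼ)² + ĥ for all x ∈ R^M. Then s ≥ rank(Σⱼ₌₁^N b⁽ʲ⁾b⁽ʲ⁾ᵀ). -/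
open Matrix

lemma my_rank_add_le {m : ℕ} (A B : Matrix (Fin m) (Fin m) ℝ) :
    (A + B).rank ≤ A.rank + B.rank := by
  rw [Matrix.rank, Matrix.rank, Matrix.rank, mulVecLin_add]
  have h : LinearMap.range (A.mulVecLin + B.mulVecLin) ≤
      LinearMap.range A.mulVecLin ⊔ LinearMap.range B.mulVecLin := by
    rintro _ ⟨x, rfl⟩
    exact Submodule.add_mem_sup ⟨x, rfl⟩ ⟨x, rfl⟩
  exact (Submodule.finrank_mono h).trans
    (Submodule.finrank_add_le_finrank_add_finrank _ _)

lemma my_rank_vecMulVec_le {m : ℕ} (w v : Fin m → ℝ) :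
    (vecMulVec w v).rank ≤ 1 := by
  rw [Matrix.rank]
  have h : LinearMap.range (vecMulVec w v).mulVecLin ≤ Submodule.span ℝ {w} := by
    rintro _ ⟨x, rfl⟩
    have : (vecMulVec w v).mulVecLin x = (v ⬝ᵥ x) • w := by
      ext i
      simp only [vecMulVec, mulVecLin_apply, mulVec, dotProduct, Matrix.of_apply,
        Pi.smul_apply, smul_eq_mul]
      rw [Finset.sum_mul]
      exact Finset.sum_congr rfl fun j _ => by ring
    rw [this]
    exact Submodule.smul_mem _ _ (Submodule.mem_span_singleton_self w)
  refine (Submodule.finrank_mono h).trans ?_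
  simpa using finrank_span_le_card ({w} : Set (Fin m → ℝ))

theorem min_number_of_squares {M N s : ℕ}
    (b : Fin N → (Fin M → ℝ)) (c : Fin N → ℝ) (h0 : ℝ)
    (b' : Fin s → (Fin M → ℝ)) (c' : Fin s → ℝ) (h1 : ℝ)
    (heq : ∀ x : Fin M → ℝ,
      (∑ j : Fin N, (b j ⬝ᵥ x + c j) ^ 2) + h0
        = (∑ j : Fin s, (b' j ⬝ᵥ x + c' j) ^ 2) + h1) :
    (∑ j : Fin N, Matrix.vecMulVec (b j) (b j)).rank ≤ s := by
  -- Step 1: the pure quadratic parts agree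
  have hq : ∀ x : Fin M → ℝ,
      (∑ j : Fin N, (b j ⬝ᵥ x) ^ 2) = ∑ j : Fin s, (b' j ⬝ᵥ x) ^ 2 := by
    intro x
    have hx := heq x
    have hnx := heq (-x)
    have h00 := heq 0
    simp only [dotProduct_neg, dotProduct_zero, zero_add] at hnx h00
    have e1 : ∀ (n : ℕ) (u : Fin n → ℝ) (d : Fin n → ℝ),
        (∑ j, (u j + d j) ^ 2) + (∑ j, (-u j + d j) ^ 2)
          = 2 * (∑ j, (u j) ^ 2) + 2 * ∑ j, (d j) ^ 2 := by
      intro n u d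
      rw [← Finset.sum_add_distrib, Finset.mul_sum, Finset.mul_sum,
        ← Finset.sum_add_distrib]
      exact Finset.sum_congr rfl fun j _ => by ring
    have e2 := e1 N (fun j => b j ⬝ᵥ x) c
    have e3 := e1 s (fun j => b' j ⬝ᵥ x) c'
    linarith [e2, e3, hx, hnx, h00]
  -- Step 2: the Gram matrices agree (polarization)
  have hA : (∑ j : Fin N, Matrix.vecMulVec (b j) (b j))
      = ∑ j : Fin s, Matrix.vecMulVec (b' j) (b' j) := by
    ext k l
    have hk := hq (Pi.single k 1)
    have hl := hq (Pi.single l 1)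
    have hkl := hq (Pi.single k 1 + Pi.single l 1)
    simp only [dotProduct_add, dotProduct_single, mul_one] at hk hl hkl
    have e1 : ∀ (n : ℕ) (u v : Fin n → ℝ),
        (∑ j, (u j + v j) ^ 2)
          = (∑ j, (u j) ^ 2) + (∑ j, (v j) ^ 2) + 2 * ∑ j, u j * v j := by
      intro n u v
      rw [Finset.mul_sum, ← Finset.sum_add_distrib, ← Finset.sum_add_distrib]
      exact Finset.sum_congr rfl fun j _ => by ring
    have e2 := e1 N (fun j => b j k) (fun j => b j l)
    have e3 := e1 s (fun j => b' j k) (fun j => b' j l)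
    simp only [Matrix.sum_apply, vecMulVec_apply]
    linarith [e2, e3, hk, hl, hkl]
  rw [hA]
  -- Step 3: rank of a sum of s rank-one matrices is at most s
  have key : ∀ t : Finset (Fin s),
      (∑ j ∈ t, Matrix.vecMulVec (b' j) (b' j)).rank ≤ t.card := by
    intro t
    induction t using Finset.induction with
    | empty => simp
    | @insert j t' hj ih =>
      rw [Finset.sum_insert hj, Finset.card_insert_of_notMem hj]
      calc (Matrix.vecMulVec (b' j) (b' j) + ∑ x ∈ t', Matrix.vecMulVec (b' x) (b' x)).rank
          ≤ (Matrix.vecMulVec (b' j) (b' j)).rank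
            + (∑ x ∈ t', Matrix.vecMulVec (b' x) (b' x)).rank := my_rank_add_le _ _
        _ ≤ 1 + t'.card := add_le_add (my_rank_vecMulVec_le _ _) ih
        _ = t'.card + 1 := by omega
  calc (∑ j : Fin s, Matrix.vecMulVec (b' j) (b' j)).rank
      ≤ (Finset.univ : Finset (Fin s)).card := key Finset.univ
    _ = s := by simp
end

section
/- Let M ≥ 3, let A ∈ R^{M×M} be symmetric and invertible, and let P ∈ R^{M×M} be symmetric. If ã A − 2APA = 0 where ã = tr(PA), then P = 0. -/
open Matrix

theorem no_second_order_terms {M : ℕ} (hM : 3 ≤ M)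
    (A P : Matrix (Fin M) (Fin M) ℝ)
    (hAsymm : Aᵀ = A) (hPsymm : Pᵀ = P)
    (hdet : A.det ≠ 0)
    (h : (P * A).trace • A - (2 : ℝ) • (A * P * A) = 0) :
    P = 0 := by
  set t := (P * A).trace with ht
  have hA : IsUnit A.det := isUnit_iff_ne_zero.mpr hdet
  have hinv : A⁻¹ * A = 1 := nonsing_inv_mul A hA
  have hinv' : A * A⁻¹ = 1 := mul_nonsing_inv A hA
  have h1 : t • A = (2 : ℝ) • (A * P * A) := by
    have := sub_eq_zero.mp h
    exact this
  -- multiply on the left by A⁻¹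
  have h2 : t • (1 : Matrix (Fin M) (Fin M) ℝ) = (2 : ℝ) • (P * A) := by
    have := congrArg (fun X => A⁻¹ * X) h1
    simpa [Matrix.mul_smul, ← Matrix.mul_assoc, hinv] using this
  -- take traces
  have h3 : t * M = 2 * t := by
    have := congrArg Matrix.trace h2
    simpa [Matrix.trace_smul, Matrix.trace_one, ht, smul_eq_mul, mul_comm] using this
  have ht0 : t = 0 := by
    have hM' : (3 : ℝ) ≤ (M : ℝ) := by exact_mod_cast hM
    nlinarith
  have h4 : A * P * A = 0 := by
    have : (0 : Matrix (Fin M) (Fin M) ℝ) = (2 : ℝ) • (A * P * A) := by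
      simpa [ht0] using h1
    have h2ne : (2 : ℝ) ≠ 0 := two_ne_zero
    have := this.symm
    simpa [smul_eq_zero, h2ne] using this
  have : A⁻¹ * (A * P * A) * A⁻¹ = 0 := by rw [h4]; simp
  rw [← Matrix.mul_assoc, ← Matrix.mul_assoc, hinv] at this
  simpa [Matrix.mul_assoc, hinv'] using this
end

section
/- Let σ ≠ 0 and B be the (N+1)×(N+1) symmetric matrix with B_{1,N+1} = B_{N+1,1} = 1, B_{ii} = 2σ for 2 ≤ i ≤ N, and all other entries 0. If a symmetric positive semidefinite matrix A ∈ R^{(N+1)×(N+1)} satisfies ãA − ABA = 0 with ã = (1/2)tr(BA), then det(A) = 0. -/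
theorem gKP_no_nonsingular_solution {N : ℕ} (hN : 2 ≤ N) (σ : ℝ) (hσ : σ ≠ 0)
    (B : Matrix (Fin (N + 1)) (Fin (N + 1)) ℝ)
    (hB : ∀ i j : Fin (N + 1), B i j =
      if (i = 0 ∧ j = Fin.last N) ∨ (i = Fin.last N ∧ j = 0) then 1
      else if i = j ∧ i ≠ 0 ∧ i ≠ Fin.last N then 2 * σ
      else 0)
    (A : Matrix (Fin (N + 1)) (Fin (N + 1)) ℝ)
    (hA : A.PosSemidef)
    (h : ((1 / 2 : ℝ) * (B * A).trace) • A - A * B * A = 0) :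
    A.det = 0 := by
  by_contra hdet
  have hU : IsUnit A.det := isUnit_iff_ne_zero.mpr hdet
  set c : ℝ := (1 / 2 : ℝ) * (B * A).trace with hc
  have hABA : A * B * A = c • A := (sub_eq_zero.mp h).symm
  have hBA : B * A = c • (1 : Matrix (Fin (N+1)) (Fin (N+1)) ℝ) := by
    have h1 : A⁻¹ * (A * B * A) = A⁻¹ * (c • A) := by rw [hABA]
    rw [← mul_assoc, ← mul_assoc, Matrix.nonsing_inv_mul A hU, one_mul,
      Matrix.mul_smul, Matrix.nonsing_inv_mul A hU] at h1
    exact h1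
  have htr : (B * A).trace = c * (N + 1) := by
    rw [hBA, Matrix.trace_smul, Matrix.trace_one]
    simp [Fintype.card_fin, mul_comm]
  have hc0 : c = 0 := by
    have h2 : 2 * c = c * (N + 1) := by rw [← htr, hc]; ring
    have hN3 : (3 : ℝ) ≤ (N : ℝ) + 1 := by
      have : (2 : ℝ) ≤ (N : ℝ) := by exact_mod_cast hN
      linarith
    nlinarith [h2]
  have hB0 : B = 0 := by
    have h2 : (B * A) * A⁻¹ = (c • 1) * A⁻¹ := by rw [hBA]
    rw [mul_assoc, Matrix.mul_nonsing_inv A hU, mul_one, hc0, zero_smul, zero_mul] at h2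
    exact h2
  have : B 0 (Fin.last N) = 1 := by
    rw [hB]; simp
  rw [hB0] at this
  simp at this
end
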